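/- Let X ⊆ ℝ, let D ⊆ X be dense in X (i.e., X is contained in the closure of D), and let f : X → ℝ be a function such that for every s ∈ X and every sequence (s_n) of elements of D converging to s, f(s_n) → f(s). Then f is continuous on X (in the subspace topology). -/

import Mathlib

open Filter

theorem continuousOn_of_seq_continuity_on_dense (X D : Set ℝ)
    (hDX : D ⊆ X) (hdense : X ⊆ closure D) (f : ℝ → ℝ)
    (hf : ∀ s ∈ X, ∀ u : ℕ → ℝ, (∀ n, u n ∈ D) →
      Tendsto u atTop (nhds s) → Tendsto (fun n => f (u n)) atTop (nhds (f s))) :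
    ContinuousOn f X := by
  -- key approximation lemma
  have key : ∀ x ∈ X, ∀ ε > (0:ℝ), ∃ d ∈ D, |d - x| < ε ∧ |f d - f x| < ε := by
    intro x hx ε hε
    obtain ⟨v, hvD, hvx⟩ := mem_closure_iff_seq_limit.mp (hdense hx)
    have hfv : Tendsto (fun n => f (v n)) atTop (nhds (f x)) := hf x hx v hvD hvx
    have h1 : ∀ᶠ n in atTop, |v n - x| < ε := by
      have := (Metric.tendsto_atTop.mp hvx) ε hε
      obtain ⟨N, hN⟩ := this
      exact eventually_atTop.2 ⟨N, fun n hn => by simpa [Real.dist_eq] using hN n hn⟩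
    have h2 : ∀ᶠ n in atTop, |f (v n) - f x| < ε := by
      have := (Metric.tendsto_atTop.mp hfv) ε hε
      obtain ⟨N, hN⟩ := this
      exact eventually_atTop.2 ⟨N, fun n hn => by simpa [Real.dist_eq] using hN n hn⟩
    obtain ⟨n, hn1, hn2⟩ := (h1.and h2).exists
    exact ⟨v n, hvD n, hn1, hn2⟩
  intro s hs
  have hDne : D.Nonempty := by
    rcases Set.nonempty_def.mpr ⟨s, hdense hs⟩ with _
    exact closure_nonempty_iff.mp ⟨s, hdense hs⟩
  obtain ⟨d0, hd0⟩ := hDne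
  rw [ContinuousWithinAt, tendsto_iff_seq_tendsto]
  intro u hu
  have huX : ∀ᶠ n in atTop, u n ∈ X := hu self_mem_nhdsWithin
  have hus : Tendsto u atTop (nhds s) := hu.mono_right nhdsWithin_le_nhds
  have sel : ∀ n : ℕ, ∃ d ∈ D,
      u n ∈ X → |d - u n| < 1 / (n + 1) ∧ |f d - f (u n)| < 1 / (n + 1) := by
    intro n
    by_cases h : u n ∈ X
    · obtain ⟨d, hdD, h1, h2⟩ := key (u n) h (1 / (n + 1)) (by positivity)
      exact ⟨d, hdD, fun _ => ⟨h1, h2⟩⟩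
    · exact ⟨d0, hd0, fun h' => absurd h' h⟩
  choose d hdD hd using sel
  have hbound : Tendsto (fun n : ℕ => 1 / ((n:ℝ) + 1)) atTop (nhds 0) :=
    tendsto_one_div_add_atTop_nhds_zero_nat
  have hdu : Tendsto (fun n => d n - u n) atTop (nhds 0) := by
    apply squeeze_zero_norm' _ hbound
    filter_upwards [huX] with n hn
    exact le_of_lt ((hd n hn).1)
  have hds : Tendsto d atTop (nhds s) := by
    have := hdu.add hus
    simpa using this
  have hfd : Tendsto (fun n => f (d n)) atTop (nhds (f s)) := hf s hs d hdD hds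
  have hfud : Tendsto (fun n => f (u n) - f (d n)) atTop (nhds 0) := by
    apply squeeze_zero_norm' _ hbound
    filter_upwards [huX] with n hn
    have := (hd n hn).2
    rw [abs_sub_comm] at this
    exact le_of_lt this
  have : Tendsto (fun n => (f (u n) - f (d n)) + f (d n)) atTop (nhds (0 + f s)) :=
    hfud.add hfd
  simpa [Function.comp_def] using this
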